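/- As ξ → 0 along real ξ ∈ (0,1), the matrix exp(−(2πi)^{−1} log(ξ) · (−N_0 + N_1)) · M′(ξ) converges to the identity matrix I, where exp is the matrix exponential. -/

import Mathlib

open Complex

noncomputable section

/-- The nilpotent endomorphism `N₀` (as a matrix, 0-based indices):
`N₀ e_j = e_{j-1}` for `1 ≤ j ≤ n-1` (paper: `2 ≤ j ≤ n`), `N₀ e_0 = N₀ e_n = 0`. -/
def N0 (n : ℕ) : Matrix (Fin (n + 1)) (Fin (n + 1)) ℂ :=
  fun i j => if (i : ℕ) + 1 = (j : ℕ) ∧ (j : ℕ) < n then 1 else 0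

/-- The nilpotent endomorphism `N₁` (0-based indices): `N₁ e_n = -e_{n-1}`
(paper: `N₁ e_{n+1} = -e_n`), and `N₁ e_j = 0` otherwise. -/
def N1 (n : ℕ) : Matrix (Fin (n + 1)) (Fin (n + 1)) ℂ :=
  fun i j => if (i : ℕ) + 1 = n ∧ (j : ℕ) = n then -1 else 0

/-- `ad N₀` acting on matrices: `(ad N₀)(M) = N₀ M - M N₀`. -/
def adN0 (n : ℕ) : Matrix (Fin (n + 1)) (Fin (n + 1)) ℂ → Matrix (Fin (n + 1)) (Fin (n + 1)) ℂ :=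
  fun M => N0 n * M - M * N0 n

/-- The polylogarithm `Li_j(x) = ∑_{k≥1} x^k / k^j`, for `|x| < 1`. -/
def Li (j : ℕ) (x : ℂ) : ℂ := ∑' k : ℕ, x ^ (k + 1) / ((k : ℂ) + 1) ^ j

/-- The slit open unit disc `U = {x : |x| < 1, x ∉ ℝ_{≤0}}`. -/
def U : Set ℂ := {x | ‖x‖ < 1 ∧ ¬(x.im = 0 ∧ x.re ≤ 0)}


/-- The matrix `M′(ξ)` (0-based indices): diagonal entries `1`,
`M′(ξ)_{i,j} = (-(2πi)⁻¹ log ξ)^{j-i}/(j-i)!` for `i < j < n`,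
`M′(ξ)_{i,n} = (-(2πi)⁻¹ log ξ)^{n-i}/(n-i)! + (-(2πi)⁻¹)^{n-i} Li_{n-i}(ξ)` for `i < n`. -/
def Mmat' (n : ℕ) (ξ : ℂ) : Matrix (Fin (n + 1)) (Fin (n + 1)) ℂ := fun i j =>
  if i = j then 1
  else if (i : ℕ) < (j : ℕ) ∧ (j : ℕ) < n then
    (-((2 * (Real.pi : ℂ) * I)⁻¹) * Complex.log ξ) ^ ((j : ℕ) - (i : ℕ)) /
      ((j : ℕ) - (i : ℕ)).factorial
  else if (i : ℕ) < (j : ℕ) ∧ (j : ℕ) = n then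
    (-((2 * (Real.pi : ℂ) * I)⁻¹) * Complex.log ξ) ^ (n - (i : ℕ)) / (n - (i : ℕ)).factorial +
      (-((2 * (Real.pi : ℂ) * I)⁻¹)) ^ (n - (i : ℕ)) * Li (n - (i : ℕ)) ξ
  else 0

/-! ### Auxiliary material -/

open Filter

/-- The full Jordan shift matrix. -/
def Jmat (n : ℕ) : Matrix (Fin (n + 1)) (Fin (n + 1)) ℂ :=
  fun i j => if (i : ℕ) + 1 = (j : ℕ) then 1 else 0

lemma Jmat_pow (n k : ℕ) (i j : Fin (n + 1)) :
    ((Jmat n) ^ k) i j = if (i : ℕ) + k = (j : ℕ) then 1 else 0 := by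
  induction k generalizing j with
  | zero =>
    simp only [pow_zero, Matrix.one_apply, Nat.add_zero]
    congr 1
    simp [Fin.ext_iff, eq_comm]
  | succ k ih =>
    rw [pow_succ, Matrix.mul_apply]
    simp only [ih]
    simp only [Jmat]
    rcases Nat.lt_or_ge ((i : ℕ) + k) n with h | h
    · rw [Finset.sum_eq_single (⟨(i : ℕ) + k, by omega⟩ : Fin (n + 1))]
      · simp only [ite_mul, one_mul, zero_mul]
        rw [if_pos trivial, ← Nat.add_assoc]
      · intro b _ hb
        rw [if_neg, zero_mul]
        intro hc
        exact hb (Fin.ext (by simpa using hc.symm))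
      · simp
    · have h1 : ∀ b : Fin (n + 1),
          (if (i : ℕ) + k = (b : ℕ) then (1:ℂ) else 0) *
            (if (b : ℕ) + 1 = (j : ℕ) then 1 else 0) = 0 := by
        intro b
        rcases eq_or_ne ((i : ℕ) + k) (b : ℕ) with hc | hc
        · rw [if_neg (show ¬((b:ℕ) + 1 = (j:ℕ)) by omega), mul_zero]
        · rw [if_neg hc, zero_mul]
      rw [Finset.sum_congr rfl fun b _ => h1 b, Finset.sum_const, smul_zero]
      rw [if_neg (by omega)]

lemma Jmat_pow_eq_zero (n k : ℕ) (hk : n + 1 ≤ k) : (Jmat n) ^ k = 0 := by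
  funext i j
  rw [Jmat_pow, if_neg (by omega)]
  rfl

lemma exp_smul_Jmat (n : ℕ) (z : ℂ) :
    NormedSpace.exp (z • Jmat n) =
      ∑ k ∈ Finset.range (n + 1), (z ^ k * ((k.factorial : ℂ))⁻¹) • (Jmat n) ^ k := by
  simp only [NormedSpace.exp_eq_tsum ℂ]
  rw [tsum_eq_sum (s := Finset.range (n + 1)) ?_]
  · refine Finset.sum_congr rfl fun k _ => ?_
    rw [smul_pow, smul_smul, mul_comm]
  · intro k hk
    rw [smul_pow, Jmat_pow_eq_zero n k (by simpa using hk)]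
    simp

lemma exp_smul_Jmat_apply (n : ℕ) (z : ℂ) (i j : Fin (n + 1)) :
    NormedSpace.exp (z • Jmat n) i j =
      if (i : ℕ) ≤ (j : ℕ) then
        z ^ ((j : ℕ) - (i : ℕ)) / (((j : ℕ) - (i : ℕ)).factorial : ℂ) else 0 := by
  rw [exp_smul_Jmat]
  have : (∑ k ∈ Finset.range (n + 1), (z ^ k * ((k.factorial : ℂ))⁻¹) • (Jmat n) ^ k) i j
      = ∑ k ∈ Finset.range (n + 1), (z ^ k * ((k.factorial : ℂ))⁻¹) *
          (if (i : ℕ) + k = (j : ℕ) then 1 else 0) := by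
    rw [Matrix.sum_apply]
    exact Finset.sum_congr rfl fun k _ => by rw [Matrix.smul_apply, Jmat_pow, smul_eq_mul]
  rw [this]
  rcases Nat.lt_or_ge ((j : ℕ)) ((i : ℕ)) with h | h
  · rw [if_neg (by omega)]
    refine Finset.sum_eq_zero fun k _ => ?_
    rw [if_neg (by omega), mul_zero]
  · rw [if_pos h]
    rw [Finset.sum_eq_single ((j : ℕ) - (i : ℕ))]
    · rw [if_pos (by omega), mul_one, div_eq_mul_inv]
    · intro k _ hk
      rw [if_neg (by omega), mul_zero]
    · intro hk
      exact absurd (Finset.mem_range.mpr (by omega)) hk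

lemma neg_N0_add_N1 (n : ℕ) : -N0 n + N1 n = -(Jmat n) := by
  funext i j
  have hj := Nat.lt_succ_iff.mp j.isLt
  simp only [Matrix.add_apply, Matrix.neg_apply, N0, N1, Jmat]
  split_ifs <;> first | (exfalso; omega) | ring

/-- The error matrix: the polylogarithm part of the last column of `Mmat'`. -/
def Emat (n : ℕ) (ξ : ℂ) : Matrix (Fin (n + 1)) (Fin (n + 1)) ℂ := fun i j =>
  if (i : ℕ) < n ∧ (j : ℕ) = n then
    (-((2 * (Real.pi : ℂ) * I)⁻¹)) ^ (n - (i : ℕ)) * Li (n - (i : ℕ)) ξ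
  else 0

lemma Mmat'_eq (n : ℕ) (ξ : ℂ) :
    Mmat' n ξ =
      NormedSpace.exp ((-((2 * (Real.pi : ℂ) * I)⁻¹) * Complex.log ξ) • Jmat n) + Emat n ξ := by
  funext i j
  rw [Matrix.add_apply, exp_smul_Jmat_apply]
  simp only [Mmat', Emat]
  rcases lt_trichotomy ((i : ℕ)) ((j : ℕ)) with h | h | h
  · rw [if_neg (by simp [Fin.ext_iff]; omega)]
    rcases Nat.lt_or_ge ((j : ℕ)) n with hj | hj
    · rw [if_pos ⟨h, hj⟩, if_pos (le_of_lt h), if_neg (by omega), add_zero]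
    · have hjn : (j : ℕ) = n := by omega
      rw [if_neg (by omega), if_pos ⟨h, hjn⟩, if_pos (le_of_lt h), if_pos ⟨by omega, hjn⟩]
      rw [hjn]
  · have : i = j := Fin.ext h
    rw [if_pos this, if_pos (le_of_eq h), if_neg (by omega), add_zero, h]
    simp
  · rw [if_neg (by simp [Fin.ext_iff]; omega), if_neg (by omega), if_neg (by omega),
      if_neg (not_le.mpr h), if_neg (by omega), add_zero]

lemma exp_smul_Jmat_mul_exp_neg_smul_Jmat (n : ℕ) (z : ℂ) :
    NormedSpace.exp (z • Jmat n) * NormedSpace.exp ((-z) • Jmat n) = 1 := by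
  have comm : Commute (z • Jmat n) ((-z) • Jmat n) := by
    show _ * _ = _ * _
    rw [smul_mul_smul_comm, smul_mul_smul_comm, mul_comm z (-z)]
  have h := (Matrix.exp_add_of_commute (z • Jmat n) ((-z) • Jmat n) comm).symm
  rw [← add_smul, add_neg_cancel, zero_smul, NormedSpace.exp_zero] at h
  exact h

lemma norm_Li_term_le (p : ℕ) (x : ℂ) (k : ℕ) :
    ‖x ^ (k + 1) / ((k : ℂ) + 1) ^ p‖ ≤ ‖x‖ * ‖x‖ ^ k := by
  rw [norm_div, norm_pow, norm_pow]
  have h1 : (1 : ℝ) ≤ ‖(k : ℂ) + 1‖ ^ p := by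
    apply one_le_pow₀
    have : ((k : ℂ) + 1) = ((k + 1 : ℕ) : ℂ) := by push_cast; ring
    rw [this, Complex.norm_natCast]
    exact_mod_cast Nat.succ_le_succ (Nat.zero_le k)
  calc ‖x‖ ^ (k + 1) / ‖(k : ℂ) + 1‖ ^ p ≤ ‖x‖ ^ (k + 1) / 1 := by
        apply div_le_div_of_nonneg_left ?_ ?_ h1 <;> positivity
    _ = ‖x‖ * ‖x‖ ^ k := by rw [div_one, pow_succ, mul_comm]

lemma norm_Li_le (p : ℕ) (x : ℂ) (hx : ‖x‖ ≤ 1 / 2) : ‖Li p x‖ ≤ 2 * ‖x‖ := by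
  have hx1 : ‖x‖ < 1 := lt_of_le_of_lt hx (by norm_num)
  have hgeom : Summable (fun k : ℕ => ‖x‖ * ‖x‖ ^ k) :=
    (summable_geometric_of_lt_one (norm_nonneg x) hx1).mul_left _
  have hsum : Summable (fun k : ℕ => ‖x ^ (k + 1) / ((k : ℂ) + 1) ^ p‖) :=
    Summable.of_nonneg_of_le (fun k => norm_nonneg _) (norm_Li_term_le p x) hgeom
  calc ‖Li p x‖ ≤ ∑' k : ℕ, ‖x ^ (k + 1) / ((k : ℂ) + 1) ^ p‖ := norm_tsum_le_tsum_norm hsum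
    _ ≤ ∑' k : ℕ, ‖x‖ * ‖x‖ ^ k := Summable.tsum_le_tsum (norm_Li_term_le p x) hsum hgeom
    _ = ‖x‖ * (1 - ‖x‖)⁻¹ := by
        rw [tsum_mul_left, tsum_geometric_of_lt_one (norm_nonneg x) hx1]
    _ ≤ ‖x‖ * 2 := by
        apply mul_le_mul_of_nonneg_left ?_ (norm_nonneg x)
        rw [inv_le_comm₀ (by linarith) (by norm_num)]
        linarith
    _ = 2 * ‖x‖ := mul_comm _ _

lemma tendsto_log_pow_mul_Li (m p : ℕ) :
    Tendsto (fun t : ℝ => (Complex.log (t : ℂ)) ^ m * Li p (t : ℂ))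
      (nhdsWithin 0 (Set.Ioo (0:ℝ) 1)) (nhds 0) := by
  set L := nhdsWithin (0:ℝ) (Set.Ioo (0:ℝ) 1) with hL
  have hmem : ∀ᶠ t in L, t ∈ Set.Ioo (0:ℝ) 1 := self_mem_nhdsWithin
  have hsmall : ∀ᶠ t in L, |t| < 1 / 2 := by
    have : Tendsto (fun t : ℝ => t) L (nhds 0) := tendsto_id.mono_left nhdsWithin_le_nhds
    have := this.eventually (eventually_abs_sub_lt 0 (by norm_num : (0:ℝ) < 1/2))
    simpa using this
  have hbound : ∀ᶠ (t : ℝ) in L, ‖(Complex.log (t : ℂ)) ^ m * Li p (t : ℂ)‖ ≤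
      |Real.log t| ^ m * (2 * t) := by
    filter_upwards [hmem, hsmall] with t ht hts
    have ht0 : 0 < t := ht.1
    have hlog : Complex.log (t : ℂ) = ((Real.log t : ℝ) : ℂ) := (Complex.ofReal_log ht0.le).symm
    have hnormt : ‖(t : ℂ)‖ = t := by
      rw [Complex.norm_real, Real.norm_eq_abs, abs_of_pos ht0]
    rw [norm_mul, norm_pow, hlog, Complex.norm_real, Real.norm_eq_abs]
    have hLi : ‖Li p (t : ℂ)‖ ≤ 2 * t := by
      have habs : t < 1 / 2 := by
        have := abs_of_pos ht0
        linarith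
      have := norm_Li_le p (t : ℂ) (by rw [hnormt]; linarith)
      rwa [hnormt] at this
    exact mul_le_mul_of_nonneg_left hLi (by positivity)
  have hneglog : Tendsto (fun t : ℝ => -Real.log t) L atTop := by
    apply tendsto_neg_atBot_atTop.comp
    exact Real.tendsto_log_nhdsGT_zero.mono_left
      (nhdsWithin_mono 0 Set.Ioo_subset_Ioi_self)
  have hg0 : Tendsto (fun t : ℝ => 2 * ((-Real.log t) ^ m * Real.exp (-(-Real.log t)))) L
      (nhds 0) := by
    have := ((Real.tendsto_pow_mul_exp_neg_atTop_nhds_zero m).comp hneglog).const_mul (2:ℝ)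
    simpa using this
  have hg : Tendsto (fun t : ℝ => |Real.log t| ^ m * (2 * t)) L (nhds 0) := by
    apply hg0.congr'
    filter_upwards [hmem] with t ht
    have ht0 : 0 < t := ht.1
    have hlt : Real.log t < 0 := Real.log_neg ht0 ht.2
    rw [neg_neg, Real.exp_log ht0, abs_of_neg hlt]
    ring
  exact squeeze_zero_norm' hbound hg

lemma tendsto_exp_mul_Emat (n : ℕ) :
    Tendsto
      (fun t : ℝ =>
        NormedSpace.exp (((2 * (Real.pi : ℂ) * I)⁻¹ * Complex.log (t : ℂ)) • Jmat n) *
          Emat n (t : ℂ))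
      (nhdsWithin 0 (Set.Ioo (0:ℝ) 1)) (nhds 0) := by
  set L := nhdsWithin (0:ℝ) (Set.Ioo (0:ℝ) 1)
  set c : ℂ := (2 * (Real.pi : ℂ) * I)⁻¹ with hc
  refine tendsto_pi_nhds.2 ?_
  intro i
  rw [tendsto_pi_nhds]
  intro j
  have h0 : (0 : Matrix (Fin (n+1)) (Fin (n+1)) ℂ) i j = 0 := rfl
  rw [h0]
  have hrw : ∀ t : ℝ,
      (NormedSpace.exp ((c * Complex.log (t : ℂ)) • Jmat n) * Emat n (t : ℂ)) i j
        = ∑ k : Fin (n + 1),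
            NormedSpace.exp ((c * Complex.log (t : ℂ)) • Jmat n) i k * Emat n (t : ℂ) k j :=
    fun t => Matrix.mul_apply
  refine Tendsto.congr (fun t => (hrw t).symm) ?_
  have : Tendsto
      (fun t : ℝ => ∑ k : Fin (n + 1),
        NormedSpace.exp ((c * Complex.log (t : ℂ)) • Jmat n) i k * Emat n (t : ℂ) k j)
      L (nhds (∑ _k : Fin (n + 1), (0:ℂ))) := by
    apply tendsto_finset_sum
    intro k _
    by_cases h1 : (k : ℕ) < n ∧ (j : ℕ) = n
    · by_cases h2 : (i : ℕ) ≤ (k : ℕ)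
      · have hterm : Tendsto
            (fun t : ℝ =>
              (c ^ ((k:ℕ) - (i:ℕ)) / (((k:ℕ) - (i:ℕ)).factorial : ℂ) * (-c) ^ (n - (k:ℕ))) *
                ((Complex.log (t : ℂ)) ^ ((k:ℕ) - (i:ℕ)) * Li (n - (k:ℕ)) (t : ℂ)))
            L (nhds 0) := by
          have := (tendsto_log_pow_mul_Li ((k:ℕ) - (i:ℕ)) (n - (k:ℕ))).const_mul
            (c ^ ((k:ℕ) - (i:ℕ)) / (((k:ℕ) - (i:ℕ)).factorial : ℂ) * (-c) ^ (n - (k:ℕ)))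
          rw [mul_zero] at this
          exact this
        refine hterm.congr fun t => ?_
        rw [exp_smul_Jmat_apply, if_pos h2]
        simp only [Emat, if_pos h1]
        rw [mul_pow]
        ring
      · refine tendsto_const_nhds.congr fun t => ?_
        rw [exp_smul_Jmat_apply, if_neg h2, zero_mul]
    · refine tendsto_const_nhds.congr fun t => ?_
      simp only [Emat, if_neg h1, mul_zero]
  simpa using this

/-- As `ξ → 0` along real `ξ ∈ (0,1)`,
`exp(-(2πi)⁻¹ log(ξ) · (-N₀ + N₁)) · M′(ξ)` converges to the identity matrix. -/
theorem tendsto_exp_neg_log_Ninfty_mul_Mmat' (n : ℕ) (hn : 1 ≤ n) :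
    Filter.Tendsto
      (fun t : ℝ =>
        NormedSpace.exp
            ((-((2 * (Real.pi : ℂ) * I)⁻¹ * Complex.log (t : ℂ))) • (-N0 n + N1 n)) *
          Mmat' n (t : ℂ))
      (nhdsWithin 0 (Set.Ioo 0 1)) (nhds 1) := by
  set L := nhdsWithin (0:ℝ) (Set.Ioo (0:ℝ) 1)
  set c : ℂ := (2 * (Real.pi : ℂ) * I)⁻¹ with hc
  have key : ∀ t : ℝ,
      NormedSpace.exp ((-(c * Complex.log (t : ℂ))) • (-N0 n + N1 n)) * Mmat' n (t : ℂ)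
        = 1 + NormedSpace.exp ((c * Complex.log (t : ℂ)) • Jmat n) * Emat n (t : ℂ) := by
    intro t
    rw [neg_N0_add_N1, neg_smul_neg, Mmat'_eq, mul_add]
    congr 1
    rw [neg_mul]
    exact exp_smul_Jmat_mul_exp_neg_smul_Jmat n (c * Complex.log (t : ℂ))
  have h0 := tendsto_exp_mul_Emat n
  have h1 : Tendsto
      (fun t : ℝ => 1 + NormedSpace.exp ((c * Complex.log (t : ℂ)) • Jmat n) *
        Emat n (t : ℂ)) L (nhds 1) := by
    have := tendsto_const_nhds (x := (1 : Matrix (Fin (n+1)) (Fin (n+1)) ℂ)) (f := L) |>.add h0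
    rw [add_zero] at this
    exact this
  exact h1.congr fun t => (key t).symm
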